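/- arXiv:math/0606295 — 2 statements merged into one kernel-verified Lean document; each statement's English description precedes it below -/
import Mathlib

section
/- Let H be a Hilbert space, f_1,…,f_m ∈ H, and X = span{f_1,…,f_m}. If M ⊆ H is a subspace with dim M ≤ n minimizing Σ_{i=1}^m ‖f_i − P_{M'} f_i‖² over all subspaces M' with dim M' ≤ n, then the subspace W = P_X(M) (the image of M under orthogonal projection onto X) satisfies W ⊆ X, dim W ≤ n, and Σ_{i=1}^m ‖f_i − P_W f_i‖² = Σ_{i=1}^m ‖f_i − P_M f_i‖². -/
open Module

lemma dist_orthogonalProjection_le {H : Type*} [NormedAddCommGroup H]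
    [InnerProductSpace ℂ H] (K : Submodule ℂ H) [K.HasOrthogonalProjection]
    (y : H) (w : K) : ‖y - Submodule.orthogonalProjectionOnto K y‖ ≤ ‖y - w‖ := by
  rw [← Submodule.starProjection_apply, Submodule.starProjection_minimal]
  exact ciInf_le ⟨0, by rintro r ⟨x, rfl⟩; positivity⟩ w

/-- If `M` is a subspace of dimension at most `n` of a Hilbert space `H` minimizing the
least squares error `∑ ‖f i − P_{M'} f i‖²` among all subspaces `M'` of dimension at most
`n`, then `W = P_X (M)`, the image of `M` under the orthogonal projection onto
`X = span {f 1, …, f m}`, satisfies `W ⊆ X`, `dim W ≤ n`, and gives the same error as `M`. -/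
theorem projection_of_optimal_subspace
    {H : Type*} [NormedAddCommGroup H] [InnerProductSpace ℂ H] [CompleteSpace H]
    {m n : ℕ} (f : Fin m → H)
    (X : Submodule ℂ H) (hX : X = Submodule.span ℂ (Set.range f)) [FiniteDimensional ℂ X]
    (M : Submodule ℂ H) [FiniteDimensional ℂ M] (hM : finrank ℂ M ≤ n)
    (hopt : ∀ (M' : Submodule ℂ H) [FiniteDimensional ℂ M'], finrank ℂ M' ≤ n →
      ∑ i, ‖f i - (Submodule.orthogonalProjectionOnto M (f i) : H)‖ ^ 2 ≤
        ∑ i, ‖f i - (Submodule.orthogonalProjectionOnto M' (f i) : H)‖ ^ 2)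
    (W : Submodule ℂ H) [FiniteDimensional ℂ W]
    (hW : W = M.map (X.subtype ∘ₗ (Submodule.orthogonalProjectionOnto X).toLinearMap)) :
    W ≤ X ∧ finrank ℂ W ≤ n ∧
      ∑ i, ‖f i - (Submodule.orthogonalProjectionOnto W (f i) : H)‖ ^ 2 =
        ∑ i, ‖f i - (Submodule.orthogonalProjectionOnto M (f i) : H)‖ ^ 2 := by
  have hWX : W ≤ X := by
    rw [hW]
    rintro x ⟨v, hv, rfl⟩
    exact (Submodule.orthogonalProjectionOnto X v).2
  have hWn : finrank ℂ W ≤ n := by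
    rw [hW]
    exact le_trans (Submodule.finrank_map_le _ _) hM
  refine ⟨hWX, hWn, le_antisymm ?_ (hopt W hWn)⟩
  apply Finset.sum_le_sum
  intro i _
  have hfX : f i ∈ X := by
    rw [hX]; exact Submodule.subset_span ⟨i, rfl⟩
  have hw : (X.subtype ∘ₗ (Submodule.orthogonalProjectionOnto X).toLinearMap)
      ((Submodule.orthogonalProjectionOnto M (f i) : H)) ∈ W := by
    rw [hW]; exact ⟨_, (Submodule.orthogonalProjectionOnto M (f i)).2, rfl⟩
  have h1 : ‖f i - (Submodule.orthogonalProjectionOnto W (f i) : H)‖ ≤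
      ‖f i - (Submodule.orthogonalProjectionOnto X ((Submodule.orthogonalProjectionOnto M (f i) : H)) : H)‖ :=
    dist_orthogonalProjection_le W (f i) ⟨_, hw⟩
  have h2 : ‖f i - (Submodule.orthogonalProjectionOnto X ((Submodule.orthogonalProjectionOnto M (f i) : H)) : H)‖ ≤
      ‖f i - (Submodule.orthogonalProjectionOnto M (f i) : H)‖ := by
    have heq : f i - (Submodule.orthogonalProjectionOnto X ((Submodule.orthogonalProjectionOnto M (f i) : H)) : H) =
        (Submodule.orthogonalProjectionOnto X (f i - (Submodule.orthogonalProjectionOnto M (f i) : H)) : H) := by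
      push_cast [map_sub, (show (Submodule.orthogonalProjectionOnto X (f i) : H) = f i from
      Submodule.starProjection_eq_self_iff.2 hfX)]
      rfl
    rw [heq]
    calc ‖(Submodule.orthogonalProjectionOnto X (f i - (Submodule.orthogonalProjectionOnto M (f i) : H)) : H)‖
        ≤ ‖Submodule.orthogonalProjectionOnto X‖ * ‖f i - (Submodule.orthogonalProjectionOnto M (f i) : H)‖ :=
          (Submodule.orthogonalProjectionOnto X).le_opNorm _
      _ ≤ 1 * ‖f i - (Submodule.orthogonalProjectionOnto M (f i) : H)‖ := by
          gcongr; exact Submodule.orthogonalProjectionOnto_norm_le X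
      _ = _ := one_mul _
  have := le_trans h1 h2
  gcongr
end

section
/- For any f ∈ X = span{f_1,…,f_m} and any finite-dimensional subspace M ⊆ H, with W = P_X(M) one has ‖f − P_W f‖ ≤ ‖f − P_M f‖. -/
/-- For any `f` in `X = span {f 1, …, f m}` and any finite-dimensional subspace `M` of a
Hilbert space `H`, with `W = P_X (M)` the image of `M` under the orthogonal projection
onto `X`, one has `‖f − P_W f‖ ≤ ‖f − P_M f‖`. -/
theorem dist_projection_to_projected_subspace_le
    {H : Type*} [NormedAddCommGroup H] [InnerProductSpace ℂ H] [CompleteSpace H]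
    {m : ℕ} (f' : Fin m → H)
    (X : Submodule ℂ H) (hX : X = Submodule.span ℂ (Set.range f')) [FiniteDimensional ℂ X]
    (M : Submodule ℂ H) [FiniteDimensional ℂ M]
    (W : Submodule ℂ H) [FiniteDimensional ℂ W]
    (hW : W = M.map (X.subtype ∘ₗ (Submodule.orthogonalProjection X).toLinearMap))
    (f : H) (hf : f ∈ X) :
    ‖f - (Submodule.orthogonalProjection W f : H)‖ ≤ ‖f - (Submodule.orthogonalProjection M f : H)‖ := by
  set g : H := (Submodule.orthogonalProjection M f : H)
  have hwW : (Submodule.orthogonalProjection X g : H) ∈ W := by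
    rw [hW]
    exact ⟨g, (Submodule.orthogonalProjection M f).2, rfl⟩
  have h1 : ‖f - (Submodule.orthogonalProjection W f : H)‖ ≤ ‖f - (Submodule.orthogonalProjection X g : H)‖ := by
    rw [← Submodule.starProjection_apply, Submodule.starProjection_minimal]
    exact ciInf_le ⟨0, by rintro _ ⟨x, rfl⟩; positivity⟩ (⟨_, hwW⟩ : W)
  have h2 : ‖f - (Submodule.orthogonalProjection X g : H)‖ ≤ ‖f - g‖ := by
    have hfX : (Submodule.orthogonalProjection X f : H) = f := by
      rw [← Submodule.starProjection_apply, Submodule.starProjection_eq_self_iff.2 hf]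
    calc ‖f - (Submodule.orthogonalProjection X g : H)‖
        = ‖(Submodule.orthogonalProjection X (f - g) : H)‖ := by
          rw [map_sub]; simp [hfX]
      _ ≤ ‖f - g‖ := by
          have := (Submodule.orthogonalProjection X).le_opNorm (f - g)
          calc ‖(Submodule.orthogonalProjection X (f - g) : H)‖
              = ‖Submodule.orthogonalProjection X (f - g)‖ := rfl
            _ ≤ ‖Submodule.orthogonalProjection X‖ * ‖f - g‖ := this
            _ ≤ 1 * ‖f - g‖ :=
                mul_le_mul_of_nonneg_right (Submodule.orthogonalProjection_norm_le X) (norm_nonneg _)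
            _ = ‖f - g‖ := one_mul _
  exact h1.trans h2
end
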